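/- Let E be a directed graph, X ⊆ E^0 a nonempty hereditary and saturated subset, and B ⊆ X^fin_∞. In the graph _X E_B of Definition 1.3, every vertex belonging to F_E(X,B) emits exactly one edge, and that edge ends in X ∪ B; every vertex of B emits infinitely many edges, all of which end in X. Consequently, every loop in _X E_B lies entirely within the restriction X̃ = (X, s^{-1}(X) ∩ r^{-1}(X), r, s) of E to X. -/

import Mathlib

open Classical

variable {V : Type*} {E : Type*}

/-- Reflexive-transitive reachability along edges of a directed graph `(V, E, src, rng)`. -/
def Reach (src rng : E → V) : V → V → Prop :=
  Relation.ReflTransGen (fun a b => ∃ e, src e = a ∧ rng e = b)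

/-- A loop in a directed graph: a nonempty list of edges, cyclically composable. -/
def IsLoop (src rng : E → V) (p : List E) : Prop :=
  p ≠ [] ∧ ∀ i : Fin p.length,
    rng (p.get i) = src (p.get ⟨((i : ℕ) + 1) % p.length, Nat.mod_lt _ i.pos⟩)

/-- A loop is vertex-simple if the sources of its edges are pairwise distinct. -/
def VertexSimple (src : E → V) (p : List E) : Prop :=
  ∀ i j : Fin p.length, i ≠ j → src (p.get i) ≠ src (p.get j)

/-- A graph has isolated loops if any two loops passing through a common vertex
share the edge at that vertex. -/
def HasIsolatedLoops (src rng : E → V) : Prop :=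
  ∀ p q : List E, IsLoop src rng p → IsLoop src rng q →
    ∀ (i : Fin p.length) (j : Fin q.length),
      src (p.get i) = src (q.get j) → p.get i = q.get j

/-- An infinite path: a sequence of composable edges. -/
def IsInfPath (src rng : E → V) (b : ℕ → E) : Prop :=
  ∀ i, rng (b i) = src (b (i + 1))

/-- Shift-tail equivalence of infinite paths. -/
def ShiftTailEquiv (b c : ℕ → E) : Prop :=
  ∃ k m : ℕ, ∀ i : ℕ, b (k + i) = c (m + i)

/-- A maximal tail: nonempty, and satisfying (MT1), (MT2), (MT3). -/
def MaximalTail (src rng : E → V) (M : Set V) : Prop :=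
  M.Nonempty ∧
  (∀ v w, w ∈ M → Reach src rng v w → v ∈ M) ∧
  (∀ v ∈ M, {e | src e = v}.Finite → {e | src e = v}.Nonempty →
    ∃ e, src e = v ∧ rng e ∈ M) ∧
  (∀ v ∈ M, ∀ w ∈ M, ∃ y ∈ M, Reach src rng v y ∧ Reach src rng w y)

/-- A hereditary set of vertices. -/
def Hereditary (src rng : E → V) (X : Set V) : Prop :=
  ∀ e, src e ∈ X → rng e ∈ X

/-- A saturated set of vertices. -/
def Saturated (src rng : E → V) (X : Set V) : Prop :=
  ∀ v, {e | src e = v}.Finite → {e | src e = v}.Nonempty →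
    (∀ e, src e = v → rng e ∈ X) → v ∈ X

/-- `LoopGE p q`: there is a path from a vertex of loop `p` to a vertex of loop `q`. -/
def LoopGE (src rng : E → V) (p q : List E) : Prop :=
  ∃ (i : Fin p.length) (j : Fin q.length),
    Reach src rng (src (p.get i)) (src (q.get j))

/-- `F_E(X,B)`: finite paths of positive length from `E⁰ \ X` to `X ∪ B` whose
intermediate vertices avoid `X ∪ B`, excluding single edges from `B` into `X`. -/
def FXB (src rng : E → V) (X B : Set V) : Set (List E) :=
  {a | a ≠ [] ∧ a.Chain' (fun e f => rng e = src f) ∧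
    (∀ e rest, a = e :: rest → src e ∉ X) ∧
    (∀ rest e, a = rest ++ [e] → rng e ∈ X ∪ B) ∧
    (∀ (i : ℕ) (h : i < a.length), i + 1 < a.length → rng (a.get ⟨i, h⟩) ∉ X ∪ B) ∧
    ¬ ∃ e, a = [e] ∧ src e ∈ B ∧ rng e ∈ X}

/-- Vertices of the graph `_X E_B`: `X ∪ B` together with `F_E(X,B)`. -/
def XEBVertSet (src rng : E → V) (X B : Set V) : Set (V ⊕ List E) :=
  {x | match x with
    | Sum.inl v => v ∈ X ∪ B
    | Sum.inr a => a ∈ FXB src rng X B}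

/-- Edges of the graph `_X E_B`: edges of `E` with source in `X`, edges of `E` from
`B` into `X`, and a copy `ᾱ` of each `α ∈ F_E(X,B)`. -/
def XEBEdge (src rng : E → V) (X B : Set V) : Type _ :=
  {x : E ⊕ List E // match x with
    | Sum.inl e => src e ∈ X ∨ (src e ∈ B ∧ rng e ∈ X)
    | Sum.inr a => a ∈ FXB src rng X B}

/-- Source map of `_X E_B`. -/
def XEBsrc (src rng : E → V) (X B : Set V) : XEBEdge src rng X B → V ⊕ List E :=
  fun x => match x.1 with
    | Sum.inl e => Sum.inl (src e)
    | Sum.inr a => Sum.inr a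

/-- Range map of `_X E_B`: an edge `ᾱ` ends at `r(α)`. -/
noncomputable def XEBrng [Nonempty V] (src rng : E → V) (X B : Set V) :
    XEBEdge src rng X B → V ⊕ List E :=
  fun x => match x.1 with
    | Sum.inl e => Sum.inl (rng e)
    | Sum.inr a => Sum.inl (a.getLast?.elim (Classical.arbitrary V) rng)

/-- In `_X E_B`: every vertex of `F_E(X,B)` emits exactly one edge, which ends in
`X ∪ B`; every vertex of `B` emits infinitely many edges, all ending in `X`; and
every loop lies entirely within the restriction of `E` to `X`. -/
theorem stmt_12 [Nonempty V] (src rng : E → V) (X B : Set V)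
    (hXne : X.Nonempty) (hher : Hereditary src rng X) (hsat : Saturated src rng X)
    (hB : B ⊆ {v | v ∉ X ∧ {e | src e = v}.Infinite ∧
      {e | src e = v ∧ rng e ∉ X}.Finite ∧ {e | src e = v ∧ rng e ∉ X}.Nonempty}) :
    (∀ a ∈ FXB src rng X B,
      (∃! x : XEBEdge src rng X B, XEBsrc src rng X B x = Sum.inr a) ∧
      (∀ x : XEBEdge src rng X B, XEBsrc src rng X B x = Sum.inr a →
        ∃ w ∈ X ∪ B, XEBrng src rng X B x = Sum.inl w)) ∧
    (∀ v ∈ B,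
      {x : XEBEdge src rng X B | XEBsrc src rng X B x = Sum.inl v}.Infinite ∧
      (∀ x : XEBEdge src rng X B, XEBsrc src rng X B x = Sum.inl v →
        ∃ w ∈ X, XEBrng src rng X B x = Sum.inl w)) ∧
    (∀ p : List (XEBEdge src rng X B),
      IsLoop (XEBsrc src rng X B) (XEBrng src rng X B) p →
      ∀ i : Fin p.length, ∃ e : E, (p.get i).1 = Sum.inl e ∧ src e ∈ X ∧ rng e ∈ X) := by
  refine ⟨?_, ?_, ?_⟩
  · intro a ha
    constructor
    · refine ⟨⟨Sum.inr a, ha⟩, rfl, ?_⟩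
      rintro ⟨x, hx⟩ h
      cases x with
      | inl e => simp [XEBsrc] at h
      | inr b =>
        have : b = a := by simpa [XEBsrc] using h
        subst this; rfl
    · rintro ⟨x, hx⟩ h
      cases x with
      | inl e => simp [XEBsrc] at h
      | inr b =>
        have hba : b = a := by simpa [XEBsrc] using h
        subst hba
        obtain ⟨hne, _, _, hlast, _, _⟩ := ha
        have hgl : b.getLast? = some (b.getLast hne) := List.getLast?_eq_getLast (l := b) hne
        refine ⟨rng (b.getLast hne), hlast _ _ (List.dropLast_append_getLast hne).symm, ?_⟩
        simp [XEBrng, hgl]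
  · intro v hv
    obtain ⟨hvX, hinf, hfin, _⟩ := hB hv
    constructor
    · have hinf2 : {e : E | src e = v ∧ rng e ∈ X}.Infinite := by
        intro hcon
        refine hinf (Set.Finite.subset (hcon.union hfin) ?_)
        intro e he
        by_cases h : rng e ∈ X
        · exact Or.inl ⟨he, h⟩
        · exact Or.inr ⟨he, h⟩
      have : Infinite {e : E // src e = v ∧ rng e ∈ X} := hinf2.to_subtype
      refine Set.infinite_of_injective_forall_mem
        (f := fun e : {e : E // src e = v ∧ rng e ∈ X} =>
          (⟨Sum.inl e.1, Or.inr ⟨by rw [e.2.1]; exact hv, e.2.2⟩⟩ : XEBEdge src rng X B)) ?_ ?_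
      · intro e f hef
        have h1 : (Sum.inl e.1 : E ⊕ List E) = Sum.inl f.1 := congrArg Subtype.val hef
        exact Subtype.ext (Sum.inl.inj h1)
      · intro e
        exact congrArg Sum.inl e.2.1
    · rintro ⟨x, hx⟩ h
      cases x with
      | inl e =>
        have hev : src e = v := by simpa [XEBsrc] using h
        rcases hx with hX | ⟨_, hrX⟩
        · exact absurd (hev ▸ hX) hvX
        · exact ⟨rng e, hrX, by simp [XEBrng]⟩
      | inr b => simp [XEBsrc] at h
  · intro p hp i
    have pred : ∀ j : Fin p.length, ∃ i' : Fin p.length,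
        ((i' : ℕ) + 1) % p.length = (j : ℕ) := by
      intro j
      rcases Nat.eq_zero_or_pos (j : ℕ) with h0 | hpos
      · refine ⟨⟨p.length - 1, Nat.sub_lt j.pos Nat.one_pos⟩, ?_⟩
        show (p.length - 1 + 1) % p.length = (j : ℕ)
        rw [h0, Nat.sub_add_cancel j.pos, Nat.mod_self]
      · refine ⟨⟨(j : ℕ) - 1, lt_trans (Nat.sub_lt hpos Nat.one_pos) j.isLt⟩, ?_⟩
        show ((j : ℕ) - 1 + 1) % p.length = (j : ℕ)
        rw [Nat.sub_add_cancel hpos, Nat.mod_eq_of_lt j.isLt]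
    have hall : ∀ j : Fin p.length, ∃ e, (p.get j).1 = Sum.inl e := by
      intro j
      obtain ⟨i', hi'⟩ := pred j
      have hloop := hp.2 i'
      have hj : (⟨((i' : ℕ) + 1) % p.length, Nat.mod_lt _ i'.pos⟩ : Fin p.length) = j :=
        Fin.ext hi'
      rw [hj] at hloop
      cases hx : (p.get j).1 with
      | inl e => exact ⟨e, rfl⟩
      | inr a =>
        exfalso
        have hsrc : XEBsrc src rng X B (p.get j) = Sum.inr a := by
          unfold XEBsrc; rw [hx]
        obtain ⟨w, hw⟩ : ∃ w, XEBrng src rng X B (p.get i') = Sum.inl w := by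
          cases hy : (p.get i').1 with
          | inl e => exact ⟨_, by unfold XEBrng; rw [hy]⟩
          | inr b => exact ⟨_, by unfold XEBrng; rw [hy]⟩
        rw [hloop, hsrc] at hw
        simp at hw
    obtain ⟨e, he⟩ := hall i
    obtain ⟨i', hi'⟩ := pred i
    obtain ⟨f, hf⟩ := hall i'
    have hloop := hp.2 i'
    have hj : (⟨((i' : ℕ) + 1) % p.length, Nat.mod_lt _ i'.pos⟩ : Fin p.length) = i :=
      Fin.ext hi'
    rw [hj] at hloop
    have hfe : rng f = src e := by
      have h1 : XEBrng src rng X B (p.get i') = Sum.inl (rng f) := by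
        unfold XEBrng; rw [hf]
      have h2 : XEBsrc src rng X B (p.get i) = Sum.inl (src e) := by
        unfold XEBsrc; rw [he]
      rw [h1, h2] at hloop
      exact Sum.inl.inj hloop
    have hfp : src f ∈ X ∨ (src f ∈ B ∧ rng f ∈ X) := by
      have := (p.get i').2
      rw [hf] at this
      exact this
    have hsX : src e ∈ X := by
      rcases hfp with h | h
      · exact hfe ▸ hher f h
      · exact hfe ▸ h.2
    exact ⟨e, he, hsX, hher e hsX⟩
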